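/- Let G be a divisor on C with deg G ≡ 0 (mod 2) and ½·deg G ≥ 2g, put n = ½·deg G − g + 1, and let X be a G-form. Choose a column u and a row v of X with k-linearly independent entries, and let f be the entry of X common to u and v. Then f does not vanish identically, and X represents the divisor D = G + min_j(div v_j), where the minimum over the divisors of the entries v_j of v is taken coefficientwise; in particular D is effective of degree ½·deg G. -/

import Mathlib

/-- All 2×2 minors of a matrix vanish, i.e. the matrix has rank at most 1. -/
def MinorsVanish {R : Type} [CommRing R] {m n : Type} (M : Matrix m n R) : Prop :=
  ∀ i i' j j', M i j * M i' j' = M i j' * M i' j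

/-- A matrix is `k`-general if some row and some column each consist of
`k`-linearly independent entries. -/
def KGeneral (k : Type) [Field k] {V : Type} [AddCommMonoid V] [Module k V]
    {m n : Type} (M : Matrix m n V) : Prop :=
  (∃ i, LinearIndependent k fun j => M i j) ∧ ∃ j, LinearIndependent k fun i => M i j

/-- Two matrices over a `k`-algebra are `k`-equivalent if `Y = Φ X Ψ` for some
invertible square matrices `Φ`, `Ψ` with entries in `k`. -/
def KEquivalent (k : Type) [Field k] {A : Type} [CommRing A] [Algebra k A]
    {m n : Type} [Fintype m] [Fintype n] [DecidableEq m] [DecidableEq n]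
    (X Y : Matrix m n A) : Prop :=
  ∃ (Φ : Matrix m m k) (Ψ : Matrix n n k), IsUnit Φ.det ∧ IsUnit Ψ.det ∧
    Y = Φ.map (algebraMap k A) * X * Ψ.map (algebraMap k A)

/-- An abstraction of a nonsingular projective curve `C` of genus `g` over an
algebraically closed field `k`, packaged together with its function field `F = k(C)`,
the divisor `div f` of a nonzero rational function (divisors are finitely supported
`ℤ`-valued functions on the points of `C`), the Riemann–Roch spaces
`L(D) = {f : f = 0 ∨ div f + D ≥ 0}`, the rings `R_E` of functions regular near the
support of a divisor and the ideals `I_E` of functions vanishing to order at least `E`,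
subject to the standard facts about them (including the Riemann–Roch theorem). -/
structure AbstractCurve (k : Type) [Field k] : Type 1 where
  /-- the points of the curve -/
  Point : Type
  /-- the function field `k(C)` -/
  F : Type
  [fieldF : Field F]
  [algF : Algebra k F]
  /-- the genus of the curve -/
  genus : ℕ
  /-- `divOf f` is the divisor of zeros and poles of `f` (junk value `0` at `f = 0`);
  its value at a point `p` is the order of vanishing of `f` at `p`. -/
  divOf : F → (Point →₀ ℤ)
  divOf_mul : ∀ f g : F, f ≠ 0 → g ≠ 0 → divOf (f * g) = divOf f + divOf g
  divOf_algebraMap : ∀ c : k, c ≠ 0 → divOf (algebraMap k F c) = 0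
  divOf_eq_zero_iff : ∀ f : F, f ≠ 0 →
    (divOf f = 0 ↔ ∃ c : k, c ≠ 0 ∧ f = algebraMap k F c)
  /-- a principal divisor has degree zero -/
  deg_divOf : ∀ f : F, f ≠ 0 → (divOf f).sum (fun _ n => n) = 0
  /-- the Riemann–Roch space `L(D)` as a `k`-subspace of the function field -/
  RR : (Point →₀ ℤ) → Submodule k F
  mem_RR : ∀ (D : Point →₀ ℤ) (f : F), f ∈ RR D ↔ f = 0 ∨ 0 ≤ divOf f + D
  finite_RR : ∀ D : Point →₀ ℤ, Module.Finite k (RR D)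
  /-- the Riemann–Roch theorem: `ℓ(D) = deg D - g + 1` whenever `deg D > 2g - 2` -/
  rank_RR : ∀ D : Point →₀ ℤ, 2 * (genus : ℤ) - 2 < D.sum (fun _ n => n) →
    (Module.finrank k (RR D) : ℤ) = D.sum (fun _ n => n) - genus + 1
  /-- the `k`-space `R_E` of functions regular in a neighborhood of the support of `E` -/
  Reg : (Point →₀ ℤ) → Submodule k F
  mem_Reg : ∀ (E : Point →₀ ℤ) (f : F),
    f ∈ Reg E ↔ f = 0 ∨ ∀ p ∈ E.support, 0 ≤ divOf f p
  /-- the `k`-space `I_E ⊆ R_E` of functions vanishing to order at least `E` -/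
  VanishIdeal : (Point →₀ ℤ) → Submodule k F
  mem_VanishIdeal : ∀ (E : Point →₀ ℤ) (f : F),
    f ∈ VanishIdeal E ↔ f = 0 ∨ ∀ p ∈ E.support, E p ≤ divOf f p

namespace AbstractCurve

attribute [instance] fieldF algF

variable {k : Type} [Field k]

/-- The degree of a divisor. -/
def deg (C : AbstractCurve k) (D : C.Point →₀ ℤ) : ℤ := D.sum fun _ n => n

/-- Linear equivalence of divisors: `D ~ D'` iff `D' = D + div f` for some `f ≠ 0`. -/
def LinEquiv (C : AbstractCurve k) (D D' : C.Point →₀ ℤ) : Prop :=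
  ∃ f : C.F, f ≠ 0 ∧ D' = D + C.divOf f

/-- A `G`-form: a square matrix with entries in `L(G)`, all of whose 2×2 minors vanish,
and which is `k`-general.  (In context its size is `n = ½ deg G - g + 1`.) -/
def IsGForm (C : AbstractCurve k) (G : C.Point →₀ ℤ) {n : ℕ}
    (X : Matrix (Fin n) (Fin n) C.F) : Prop :=
  (∀ i j, X i j ∈ C.RR G) ∧ MinorsVanish X ∧ KGeneral k X

/-- The `G`-form `X` represents the divisor `D` (of degree `½ deg G`): `X = u v` where
the entries of the column vector `u` form a `k`-basis of `L(D)` and the entries of the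
row vector `v` form a `k`-basis of `L(G - D)`. -/
def Represents (C : AbstractCurve k) (G D : C.Point →₀ ℤ) {n : ℕ}
    (X : Matrix (Fin n) (Fin n) C.F) : Prop :=
  ∃ u v : Fin n → C.F,
    LinearIndependent k u ∧ Submodule.span k (Set.range u) = C.RR D ∧
    LinearIndependent k v ∧ Submodule.span k (Set.range v) = C.RR (G - D) ∧
    ∀ i j, X i j = u i * v j

/-- An `E`-compression functional `ρ : L(G) → k` (realized as a `k`-linear functional
on the function field): `ρ` kills `L(G - E)`, and for every divisor `D` of degree
`½ deg G` the induced pairing `(a, b) ↦ ρ(ab)` on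
`L(D)/L(D-E) × L(G-D)/L(G-D-E)` is a perfect pairing of `(deg E)`-dimensional
`k`-vector spaces (expressed by nondegeneracy on both sides together with both
quotients having dimension `deg E`). -/
def IsCompression (C : AbstractCurve k) (G E : C.Point →₀ ℤ) (ρ : C.F →ₗ[k] k) : Prop :=
  (∀ f ∈ C.RR (G - E), ρ f = 0) ∧
  ∀ D : C.Point →₀ ℤ, 2 * C.deg D = C.deg G →
    (∀ a ∈ C.RR D, (∀ b ∈ C.RR (G - D), ρ (a * b) = 0) → a ∈ C.RR (D - E)) ∧
    (∀ b ∈ C.RR (G - D), (∀ a ∈ C.RR D, ρ (a * b) = 0) → b ∈ C.RR (G - D - E)) ∧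
    (Module.finrank k
      (C.RR D ⧸ Submodule.comap (C.RR D).subtype (C.RR (D - E))) : ℤ) = C.deg E ∧
    (Module.finrank k
      (C.RR (G - D) ⧸
        Submodule.comap (C.RR (G - D)).subtype (C.RR (G - D - E))) : ℤ) = C.deg E

end AbstractCurve
namespace AbstractCurve

variable {k : Type} [Field k]

lemma deg_add' (C : AbstractCurve k) (A B : C.Point →₀ ℤ) :
    C.deg (A + B) = C.deg A + C.deg B :=
  Finsupp.sum_add_index' (fun _ => rfl) (fun _ _ _ => rfl)

lemma deg_sub' (C : AbstractCurve k) (A B : C.Point →₀ ℤ) :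
    C.deg (A - B) = C.deg A - C.deg B :=
  Finsupp.sum_sub_index (fun _ _ _ => rfl)

lemma deg_single' (C : AbstractCurve k) (p : C.Point) (e : ℤ) :
    C.deg (Finsupp.single p e) = e :=
  Finsupp.sum_single_index rfl

lemma RR_mono' (C : AbstractCurve k) {A B : C.Point →₀ ℤ} (h : A ≤ B) :
    C.RR A ≤ C.RR B := by
  intro f hf
  rw [C.mem_RR] at hf ⊢
  rcases hf with h0 | h1
  · exact Or.inl h0
  · exact Or.inr (h1.trans (add_le_add_right h _))

lemma divOf_inv' (C : AbstractCurve k) {f : C.F} (hf : f ≠ 0) :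
    C.divOf f⁻¹ = -C.divOf f := by
  have h1 : C.divOf (f * f⁻¹) = C.divOf f + C.divOf f⁻¹ :=
    C.divOf_mul f f⁻¹ hf (inv_ne_zero hf)
  rw [mul_inv_cancel₀ hf] at h1
  have h2 : C.divOf (1 : C.F) = 0 := by
    have := C.divOf_algebraMap 1 one_ne_zero
    rwa [map_one] at this
  rw [h2] at h1
  exact (neg_eq_of_add_eq_zero_right h1.symm).symm

lemma card_le_finrank' (C : AbstractCurve k) {m : ℕ} {A : C.Point →₀ ℤ}
    {w : Fin m → C.F} (hw : LinearIndependent k w) (hmem : ∀ i, w i ∈ C.RR A) :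
    m ≤ Module.finrank k (C.RR A) := by
  haveI := C.finite_RR A
  have hspan : Submodule.span k (Set.range w) ≤ C.RR A := by
    rw [Submodule.span_le]; rintro _ ⟨i, rfl⟩; exact hmem i
  have h2 := Submodule.finrank_mono (R := k) (M := C.F) hspan
  rwa [finrank_span_eq_card hw, Fintype.card_fin] at h2

lemma finrank_RR_le' (C : AbstractCurve k) (A E : C.Point →₀ ℤ) (hE : 0 ≤ E)
    (hd : 2 * (C.genus : ℤ) - 2 < C.deg A + C.deg E) :
    (Module.finrank k (C.RR A) : ℤ) ≤ C.deg A + C.deg E - C.genus + 1 := by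
  haveI := C.finite_RR (A + E)
  have h1 : C.RR A ≤ C.RR (A + E) := C.RR_mono' (le_add_of_nonneg_right hE)
  have h2 := Submodule.finrank_mono (R := k) (M := C.F) h1
  have hdeg : (A + E).sum (fun _ n => n) = C.deg A + C.deg E := C.deg_add' A E
  have h3 := C.rank_RR (A + E) (by rw [hdeg]; exact hd)
  rw [hdeg] at h3
  rw [← h3]
  exact_mod_cast h2

end AbstractCurve
open AbstractCurve in
/-- Let `G` be a divisor with `deg G = 2s` even and `s ≥ 2g`, let
`n = s - g + 1` and let `X` be a `G`-form.  Choose a column `j₀` and a row `i₀` of `X`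
with `k`-linearly independent entries and let `f = X i₀ j₀` be their common entry.
Then `f` does not vanish identically, and `X` represents the divisor
`D = G + min_j (div v_j)` (pointwise minimum over the entries `v_j = X i₀ j` of the
chosen row); in particular `D` is effective of degree `s = ½ deg G`. -/
theorem gform_represents_row_min (k : Type) [Field k] [IsAlgClosed k]
    (C : AbstractCurve k) (G : C.Point →₀ ℤ) (s : ℤ)
    (hG : C.deg G = 2 * s) (hs : 2 * (C.genus : ℤ) ≤ s)
    (n : ℕ) (hn : (n : ℤ) = s - C.genus + 1)
    (X : Matrix (Fin n) (Fin n) C.F) (hX : C.IsGForm G X)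
    (i₀ j₀ : Fin n)
    (hcol : LinearIndependent k fun i => X i j₀)
    (hrow : LinearIndependent k fun j => X i₀ j) :
    X i₀ j₀ ≠ 0 ∧
      ∀ D : C.Point →₀ ℤ,
        (∀ p : C.Point,
          D p = G p + Finset.univ.inf'
            ⟨⟨0, by omega⟩, Finset.mem_univ _⟩ (fun j : Fin n => C.divOf (X i₀ j) p)) →
        0 ≤ D ∧ C.deg D = s ∧ C.Represents G D X := by
  classical
  obtain ⟨hmem, hminor, -⟩ := hX
  have hf : X i₀ j₀ ≠ 0 := hrow.ne_zero j₀
  refine ⟨hf, fun D hD => ?_⟩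
  have hne : (Finset.univ : Finset (Fin n)).Nonempty :=
    ⟨⟨0, by omega⟩, Finset.mem_univ _⟩
  have hv0 : ∀ j, X i₀ j ≠ 0 := fun j => hrow.ne_zero j
  have hu0 : ∀ i, X i j₀ ≠ 0 := fun i => hcol.ne_zero i
  have hvGp : ∀ i j, X i j ≠ 0 → ∀ p, 0 ≤ C.divOf (X i j) p + G p := by
    intro i j h0 p
    have h1 : 0 ≤ C.divOf (X i j) + G :=
      ((C.mem_RR G (X i j)).1 (hmem i j)).resolve_left h0
    have := Finsupp.le_def.1 h1 p
    simpa using this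
  set m : C.Point → ℤ := fun p =>
    Finset.univ.inf' hne (fun j : Fin n => C.divOf (X i₀ j) p) with hm
  have hDp : ∀ p, D p = G p + m p := hD
  have hDpos : 0 ≤ D := by
    rw [Finsupp.le_def]
    intro p
    have h1 : -G p ≤ m p :=
      Finset.le_inf' hne _ fun j _ => by have := hvGp i₀ j (hv0 j) p; linarith
    have := hDp p
    simp only [Finsupp.coe_zero, Pi.zero_apply]
    omega
  have hvGD : ∀ j, X i₀ j ∈ C.RR (G - D) := by
    intro j
    rw [C.mem_RR]
    refine Or.inr ?_
    rw [Finsupp.le_def]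
    intro p
    have h1 : m p ≤ C.divOf (X i₀ j) p := Finset.inf'_le _ (Finset.mem_univ j)
    have h2 := hDp p
    simp only [Finsupp.coe_zero, Pi.zero_apply, Finsupp.add_apply, Finsupp.sub_apply]
    omega
  set f : C.F := X i₀ j₀ with hfdef
  set u : Fin n → C.F := fun i => X i j₀ * f⁻¹ with hu
  have hu0' : ∀ i, u i ≠ 0 := fun i => mul_ne_zero (hu0 i) (inv_ne_zero hf)
  have hfac : ∀ i j, X i j = u i * X i₀ j := by
    intro i j
    have h1 : X i j * X i₀ j₀ = X i j₀ * X i₀ j := hminor i i₀ j j₀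
    show X i j = X i j₀ * f⁻¹ * X i₀ j
    rw [hfdef]
    field_simp [show X i₀ j₀ ≠ 0 from hf]
    linear_combination h1
  have huD : ∀ i, u i ∈ C.RR D := by
    intro i
    rw [C.mem_RR]
    refine Or.inr ?_
    rw [Finsupp.le_def]
    intro p
    obtain ⟨j, -, hj⟩ :=
      Finset.exists_mem_eq_inf' hne (fun j : Fin n => C.divOf (X i₀ j) p)
    have hXij : X i j ≠ 0 := by
      rw [hfac i j]; exact mul_ne_zero (hu0' i) (hv0 j)
    have hdm : C.divOf (X i j) = C.divOf (u i) + C.divOf (X i₀ j) := by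
      rw [hfac i j]; exact C.divOf_mul _ _ (hu0' i) (hv0 j)
    have h1 : 0 ≤ C.divOf (X i j) p + G p := hvGp i j hXij p
    have h2 : C.divOf (X i j) p = C.divOf (u i) p + C.divOf (X i₀ j) p := by
      rw [hdm]; simp
    have h3 : m p = C.divOf (X i₀ j) p := hj
    have h4 := hDp p
    simp only [Finsupp.coe_zero, Pi.zero_apply, Finsupp.add_apply]
    omega
  have hu_indep : LinearIndependent k u := by
    have hker : LinearMap.ker (LinearMap.mulRight k (f⁻¹ : C.F)) = ⊥ :=
      LinearMap.ker_eq_bot.2 (mul_left_injective₀ (inv_ne_zero hf))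
    have h2 := hcol.map' (LinearMap.mulRight k (f⁻¹ : C.F)) hker
    have h3 : u = (LinearMap.mulRight k (f⁻¹ : C.F)) ∘ (fun i => X i j₀) := by
      funext i
      simp [hu, LinearMap.mulRight_apply]
    rw [h3]
    exact h2
  haveI := C.finite_RR D
  haveI := C.finite_RR (G - D)
  have hnD : n ≤ Module.finrank k (C.RR D) := C.card_le_finrank' hu_indep huD
  have hnGD : n ≤ Module.finrank k (C.RR (G - D)) := C.card_le_finrank' hrow hvGD
  have hnD' : (n : ℤ) ≤ (Module.finrank k (C.RR D) : ℤ) := by exact_mod_cast hnD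
  have hnGD' : (n : ℤ) ≤ (Module.finrank k (C.RR (G - D)) : ℤ) := by exact_mod_cast hnGD
  have hdegGD : C.deg (G - D) = 2 * s - C.deg D := by rw [C.deg_sub', hG]
  have hd0 : 0 ≤ C.deg D :=
    Finset.sum_nonneg fun p _ => by have := Finsupp.le_def.1 hDpos p; simpa using this
  have hdeg0 : C.deg (0 : C.Point →₀ ℤ) = 0 := Finsupp.sum_zero_index
  have hpoint : 1 ≤ (C.genus : ℤ) → Nonempty C.Point := by
    intro hg1
    by_contra hempty
    have hG0 : G = 0 := by ext p; exact (hempty ⟨p⟩).elim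
    rw [hG0] at hG
    omega
  -- first inequality : s ≤ deg D
  have hlow : 2 * (C.genus : ℤ) - 2 < C.deg D := by
    by_contra hcon
    push_neg at hcon
    have hg1 : 1 ≤ (C.genus : ℤ) := by omega
    obtain ⟨p⟩ := hpoint hg1
    have hE : 0 ≤ (Finsupp.single p (2 * (C.genus : ℤ) - 1 - C.deg D) : C.Point →₀ ℤ) := by
      rw [Finsupp.le_def]
      intro q
      simp only [Finsupp.coe_zero, Pi.zero_apply, Finsupp.single_apply]
      split <;> omega
    have hEdeg := C.deg_single' p (2 * (C.genus : ℤ) - 1 - C.deg D)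
    have hb := C.finrank_RR_le' D (Finsupp.single p (2 * (C.genus : ℤ) - 1 - C.deg D)) hE
      (by rw [hEdeg]; omega)
    rw [hEdeg] at hb
    omega
  have hsd : s ≤ C.deg D := by
    have h1 : (Module.finrank k (C.RR D) : ℤ) = C.deg D - C.genus + 1 :=
      C.rank_RR D (show 2 * (C.genus : ℤ) - 2 < C.deg D from hlow)
    omega
  -- second inequality : deg D ≤ s
  have hlow2 : 2 * (C.genus : ℤ) - 2 < 2 * s - C.deg D := by
    by_contra hcon
    push_neg at hcon
    obtain ⟨p⟩ : Nonempty C.Point := by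
      by_cases hg1 : 1 ≤ (C.genus : ℤ)
      · exact hpoint hg1
      · have hdne : D ≠ 0 := by
          intro h0
          have hdd : C.deg D = 0 := by rw [h0]; exact hdeg0
          omega
        obtain ⟨p, -⟩ := Finsupp.support_nonempty_iff.2 hdne
        exact ⟨p⟩
    have hE : 0 ≤ (Finsupp.single p (2 * (C.genus : ℤ) - 1 - (2 * s - C.deg D)) :
        C.Point →₀ ℤ) := by
      rw [Finsupp.le_def]
      intro q
      simp only [Finsupp.coe_zero, Pi.zero_apply, Finsupp.single_apply]
      split <;> omega
    have hEdeg := C.deg_single' p (2 * (C.genus : ℤ) - 1 - (2 * s - C.deg D))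
    have hb := C.finrank_RR_le' (G - D)
      (Finsupp.single p (2 * (C.genus : ℤ) - 1 - (2 * s - C.deg D))) hE
      (by rw [hEdeg, hdegGD]; omega)
    rw [hEdeg, hdegGD] at hb
    omega
  have hds : C.deg D ≤ s := by
    have h1 : (Module.finrank k (C.RR (G - D)) : ℤ) = C.deg (G - D) - C.genus + 1 :=
      C.rank_RR (G - D) (show 2 * (C.genus : ℤ) - 2 < C.deg (G - D) by omega)
    rw [hdegGD] at h1
    omega
  have hdeq : C.deg D = s := le_antisymm hds hsd
  -- finrank equalities
  have hfrD : Module.finrank k (C.RR D) = n := by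
    have h1 : (Module.finrank k (C.RR D) : ℤ) = C.deg D - C.genus + 1 :=
      C.rank_RR D (show 2 * (C.genus : ℤ) - 2 < C.deg D from hlow)
    omega
  have hfrGD : Module.finrank k (C.RR (G - D)) = n := by
    have h1 : (Module.finrank k (C.RR (G - D)) : ℤ) = C.deg (G - D) - C.genus + 1 :=
      C.rank_RR (G - D) (show 2 * (C.genus : ℤ) - 2 < C.deg (G - D) by omega)
    rw [hdegGD] at h1
    omega
  -- spans
  have spanD : Submodule.span k (Set.range u) = C.RR D := by
    have hle : Submodule.span k (Set.range u) ≤ C.RR D := by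
      rw [Submodule.span_le]; rintro _ ⟨i, rfl⟩; exact huD i
    refine Submodule.eq_of_le_of_finrank_le hle ?_
    rw [hfrD, finrank_span_eq_card hu_indep, Fintype.card_fin]
  have spanGD : Submodule.span k (Set.range fun j => X i₀ j) = C.RR (G - D) := by
    have hle : Submodule.span k (Set.range fun j => X i₀ j) ≤ C.RR (G - D) := by
      rw [Submodule.span_le]; rintro _ ⟨j, rfl⟩; exact hvGD j
    refine Submodule.eq_of_le_of_finrank_le hle ?_
    rw [hfrGD, finrank_span_eq_card hrow, Fintype.card_fin]
  exact ⟨hDpos, hdeq, u, fun j => X i₀ j, hu_indep, spanD, hrow, spanGD, hfac⟩
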